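/- arXiv:2404.14800 — 5 statements merged into one kernel-verified Lean document; each statement's English description precedes it below -/
import Mathlib

section
/- Let f, g : H → (-∞,+∞] be proper, lsc, ρ-strongly convex (ρ > 0), and h convex differentiable with L-Lipschitz gradient, where 2ρ > L. If x₁ and x₂ both satisfy 0 ∈ ∂f(x) + ∂g(x) - ∇h(x), then x₁ = x₂. -/
open InnerProductSpace Filter

section Defs
variable {H : Type*} [NormedAddCommGroup H] [InnerProductSpace ℝ H] [CompleteSpace H]

def ProperE (f : H → EReal) : Prop := (∀ x, f x ≠ ⊥) ∧ ∃ x, f x ≠ ⊤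

def ConvexE (f : H → EReal) : Prop :=
  ∀ x y : H, ∀ a b : ℝ, 0 ≤ a → 0 ≤ b → a + b = 1 →
    f (a • x + b • y) ≤ (a : EReal) * f x + (b : EReal) * f y

def StrongConvexE (ρ : ℝ) (f : H → EReal) : Prop :=
  ConvexE (fun x => f x - ((ρ / 2 * ‖x‖ ^ 2 : ℝ) : EReal))

def SubdiffE (f : H → EReal) (x : H) : Set H :=
  {u | ∀ z, f x + ((inner ℝ (z - x) u : ℝ) : EReal) ≤ f z}

def IsProx (β : ℝ) (f : H → EReal) (u y : H) : Prop :=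
  ∀ v, f y + ((1 / (2 * β) * ‖y - u‖ ^ 2 : ℝ) : EReal)
      ≤ f v + ((1 / (2 * β) * ‖v - u‖ ^ 2 : ℝ) : EReal)

def StationaryPt (f g : H → EReal) (h' : H → H) (x : H) : Prop :=
  ∃ u ∈ SubdiffE f x, ∃ v ∈ SubdiffE g x, u + v - h' x = 0

def WeakTendsto (x : ℕ → H) (p : H) : Prop :=
  ∀ φ : H →L[ℝ] ℝ, Tendsto (fun n => φ (x n)) atTop (nhds (φ p))

end Defs

lemma fin_of_subdiff {H : Type*} [NormedAddCommGroup H] [InnerProductSpace ℝ H]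
    {f : H → EReal} (hfp : ProperE f) {x u : H} (hu : u ∈ SubdiffE f x) :
    ∃ r : ℝ, f x = (r : EReal) := by
  obtain ⟨hbot, z, hz⟩ := hfp
  refine ⟨(f x).toReal, (EReal.coe_toReal ?_ (hbot x)).symm⟩
  intro ht
  apply hz
  have h2 := hu z
  rw [ht, EReal.top_add_coe] at h2
  exact top_le_iff.mp h2

lemma norm_combo_sq {H : Type*} [NormedAddCommGroup H] [InnerProductSpace ℝ H]
    (x z : H) (a b : ℝ) (hab : a + b = 1) :
    a * ‖x‖ ^ 2 + b * ‖z‖ ^ 2 - ‖a • x + b • z‖ ^ 2 = a * b * ‖x - z‖ ^ 2 := by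
  have h1 : ‖a • x + b • z‖ ^ 2 = ‖a • x‖ ^ 2 + 2 * inner ℝ (a • x) (b • z) + ‖b • z‖ ^ 2 :=
    norm_add_sq_real _ _
  have h2 : ‖x - z‖ ^ 2 = ‖x‖ ^ 2 - 2 * inner ℝ x z + ‖z‖ ^ 2 := norm_sub_sq_real _ _
  have h3 : (inner ℝ (a • x) (b • z) : ℝ) = a * b * inner ℝ x z := by
    rw [real_inner_smul_left, real_inner_smul_right]; ring
  have h4 : ‖a • x‖ ^ 2 = a ^ 2 * ‖x‖ ^ 2 := by
    rw [norm_smul, mul_pow, Real.norm_eq_abs, sq_abs]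
  have h5 : ‖b • z‖ ^ 2 = b ^ 2 * ‖z‖ ^ 2 := by
    rw [norm_smul, mul_pow, Real.norm_eq_abs, sq_abs]
  have hb : b = 1 - a := by linarith
  subst hb
  rw [h1, h2, h3, h4, h5]; ring

lemma aux_mul_div (P D : ℝ) (hP : P ≠ 0) : P * (D / (2 * P)) = D / 2 := by
  field_simp

lemma strong_subgrad {H : Type*} [NormedAddCommGroup H] [InnerProductSpace ℝ H]
    {f : H → EReal} {ρ : ℝ} (hfp : ProperE f) (hfsc : StrongConvexE ρ f)
    {x u : H} (hu : u ∈ SubdiffE f x) {z : H} {r s : ℝ}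
    (hr : f x = (r : EReal)) (hs : f z = (s : EReal)) :
    r + (inner ℝ (z - x) u : ℝ) + ρ / 2 * ‖z - x‖ ^ 2 ≤ s := by
  set N : ℝ := ‖z - x‖ ^ 2 with hN
  set ip : ℝ := (inner ℝ (z - x) u : ℝ) with hip
  have key : ∀ t : ℝ, 0 < t → t ≤ 1 → r + ip + ρ / 2 * (1 - t) * N ≤ s := by
    intro t ht0 ht1
    have hsc := hfsc x z (1 - t) t (by linarith) ht0.le (by ring)
    simp only at hsc
    set zt : H := (1 - t) • x + t • z with hzt
    have hne : f zt ≠ ⊥ := hfp.1 zt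
    have hrhs : ((1 - t : ℝ) : EReal) * ((f x) - ((ρ / 2 * ‖x‖ ^ 2 : ℝ) : EReal))
        + (t : EReal) * ((f z) - ((ρ / 2 * ‖z‖ ^ 2 : ℝ) : EReal))
        = (((1 - t) * (r - ρ / 2 * ‖x‖ ^ 2) + t * (s - ρ / 2 * ‖z‖ ^ 2) : ℝ) : EReal) := by
      rw [hr, hs, ← EReal.coe_sub, ← EReal.coe_sub, ← EReal.coe_mul, ← EReal.coe_mul,
        ← EReal.coe_add]
    rw [hrhs] at hsc
    have hntop : f zt ≠ ⊤ := by
      intro htop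
      rw [htop, EReal.top_sub_coe] at hsc
      exact absurd hsc (EReal.coe_lt_top _).not_ge
    obtain ⟨q, hq⟩ : ∃ q : ℝ, f zt = (q : EReal) :=
      ⟨(f zt).toReal, (EReal.coe_toReal hntop hne).symm⟩
    rw [hq, ← EReal.coe_sub, EReal.coe_le_coe_iff] at hsc
    have hsub := hu zt
    have hztx : zt - x = t • (z - x) := by rw [hzt]; module
    have hipz : (inner ℝ (zt - x) u : ℝ) = t * ip := by rw [hztx, real_inner_smul_left, hip]
    rw [hr, hq, hipz, ← EReal.coe_add, EReal.coe_le_coe_iff] at hsub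
    have hcombo := norm_combo_sq x z (1 - t) t (by ring)
    rw [← hzt] at hcombo
    have hNrev : ‖x - z‖ ^ 2 = N := by rw [hN, norm_sub_rev]
    rw [hNrev] at hcombo
    have hc2 : ρ / 2 * ((1 - t) * ‖x‖ ^ 2 + t * ‖z‖ ^ 2 - ‖zt‖ ^ 2)
        = ρ / 2 * ((1 - t) * t * N) := by rw [hcombo]
    have hq2 : q ≤ (1 - t) * r + t * s - ρ / 2 * ((1 - t) * t * N) := by linarith [hsc, hc2]
    have h3 : t * (r + ip + ρ / 2 * (1 - t) * N) ≤ t * s := by nlinarith [hq2, hsub]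
    exact le_of_mul_le_mul_left h3 ht0
  by_contra hcon
  push_neg at hcon
  have hNpos : 0 ≤ N := sq_nonneg _
  rcases le_or_gt (ρ / 2 * N) 0 with h0 | h0
  · linarith [key 1 one_pos le_rfl]
  · have hδ : 0 < r + ip + ρ / 2 * N - s := by linarith
    have ht0 : 0 < min 1 ((r + ip + ρ / 2 * N - s) / (2 * (ρ / 2 * N))) :=
      lt_min one_pos (div_pos hδ (by linarith))
    have h1 := key _ ht0 (min_le_left _ _)
    have htle : min 1 ((r + ip + ρ / 2 * N - s) / (2 * (ρ / 2 * N)))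
        ≤ (r + ip + ρ / 2 * N - s) / (2 * (ρ / 2 * N)) := min_le_right _ _
    have hne0 : ρ / 2 * N ≠ 0 := ne_of_gt h0
    have h2 : ρ / 2 * N * min 1 ((r + ip + ρ / 2 * N - s) / (2 * (ρ / 2 * N)))
        ≤ (r + ip + ρ / 2 * N - s) / 2 := by
      calc ρ / 2 * N * min 1 ((r + ip + ρ / 2 * N - s) / (2 * (ρ / 2 * N)))
          ≤ ρ / 2 * N * ((r + ip + ρ / 2 * N - s) / (2 * (ρ / 2 * N))) :=
            mul_le_mul_of_nonneg_left htle h0.le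
        _ = (r + ip + ρ / 2 * N - s) / 2 := aux_mul_div _ _ hne0
    nlinarith [h1, h2]
theorem stationary_point_unique {H : Type*} [NormedAddCommGroup H] [InnerProductSpace ℝ H] [CompleteSpace H]
    (f g : H → EReal) (h : H → ℝ) (h' : H → H) (ρ L : ℝ)
    (hρ : 0 < ρ) (hL : 0 < L) (hρL : L < 2 * ρ)
    (hfp : ProperE f) (hflsc : LowerSemicontinuous f) (hfsc : StrongConvexE ρ f)
    (hgp : ProperE g) (hglsc : LowerSemicontinuous g) (hgsc : StrongConvexE ρ g)
    (hconv : ConvexOn ℝ Set.univ h)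
    (hgrad : ∀ x, HasGradientAt h (h' x) x)
    (hlip : LipschitzWith (Real.toNNReal L) h')
    (x₁ x₂ : H)
    (hx₁ : StationaryPt f g h' x₁) (hx₂ : StationaryPt f g h' x₂) :
    x₁ = x₂ := by
  obtain ⟨u₁, hu₁, v₁, hv₁, he₁⟩ := hx₁
  obtain ⟨u₂, hu₂, v₂, hv₂, he₂⟩ := hx₂
  obtain ⟨r₁, hr₁⟩ := fin_of_subdiff hfp hu₁
  obtain ⟨r₂, hr₂⟩ := fin_of_subdiff hfp hu₂
  obtain ⟨s₁, hs₁⟩ := fin_of_subdiff hgp hv₁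
  obtain ⟨s₂, hs₂⟩ := fin_of_subdiff hgp hv₂
  have B1 := strong_subgrad hfp hfsc hu₁ hr₁ hr₂
  have B2 := strong_subgrad hfp hfsc hu₂ hr₂ hr₁
  have B3 := strong_subgrad hgp hgsc hv₁ hs₁ hs₂
  have B4 := strong_subgrad hgp hgsc hv₂ hs₂ hs₁
  set d : H := x₁ - x₂ with hd
  have hrev : ‖x₂ - x₁‖ = ‖d‖ := by rw [hd, norm_sub_rev]
  rw [hrev] at B1 B3
  have hi1 : (inner ℝ (x₂ - x₁) u₁ : ℝ) = - inner ℝ d u₁ := by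
    rw [hd, ← inner_neg_left, neg_sub]
  have hi3 : (inner ℝ (x₂ - x₁) v₁ : ℝ) = - inner ℝ d v₁ := by
    rw [hd, ← inner_neg_left, neg_sub]
  rw [hi1] at B1
  rw [hi3] at B3
  -- strong monotonicity: ⟨d, (u₁+v₁) - (u₂+v₂)⟩ ≥ 2ρ‖d‖²
  have hmono : 2 * ρ * ‖d‖ ^ 2 ≤ inner ℝ d (u₁ + v₁) - inner ℝ d (u₂ + v₂) := by
    rw [inner_add_right, inner_add_right]
    linarith [B1, B2, B3, B4]
  have huv₁ : u₁ + v₁ = h' x₁ := by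
    have := he₁; rwa [sub_eq_zero] at this
  have huv₂ : u₂ + v₂ = h' x₂ := by
    have := he₂; rwa [sub_eq_zero] at this
  rw [huv₁, huv₂, ← inner_sub_right] at hmono
  -- Lipschitz bound
  have hlipd : ‖h' x₁ - h' x₂‖ ≤ L * ‖d‖ := by
    have h1 := hlip.dist_le_mul x₁ x₂
    rw [dist_eq_norm, dist_eq_norm, Real.coe_toNNReal L hL.le] at h1
    exact h1
  have hcs : (inner ℝ d (h' x₁ - h' x₂) : ℝ) ≤ L * ‖d‖ ^ 2 := by
    calc (inner ℝ d (h' x₁ - h' x₂) : ℝ) ≤ ‖d‖ * ‖h' x₁ - h' x₂‖ := real_inner_le_norm _ _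
      _ ≤ ‖d‖ * (L * ‖d‖) := by
          apply mul_le_mul_of_nonneg_left hlipd (norm_nonneg _)
      _ = L * ‖d‖ ^ 2 := by ring
  have hzero : ‖d‖ ^ 2 ≤ 0 := by nlinarith [hmono, hcs]
  have : ‖d‖ = 0 := by nlinarith [norm_nonneg d, sq_nonneg ‖d‖]
  have hd0 : d = 0 := norm_eq_zero.mp this
  rw [hd] at hd0
  exact sub_eq_zero.mp hd0
end

section
/- Let β > 0, f, g : H → (-∞,+∞] proper lsc convex, h convex differentiable. A point x satisfies 0 ∈ ∂f(x) + ∂g(x) - ∇h(x) if and only if there exists y ∈ H such that x = prox_{βf}(y) and x = prox_{βg}(2x - y + β∇h(x)). -/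
open InnerProductSpace Filter

section Aux
variable {H : Type*} [NormedAddCommGroup H] [InnerProductSpace ℝ H]

lemma subdiff_imp_prox (f : H → EReal) (β : ℝ) (hβ : 0 < β) (u x : H)
    (hu : β⁻¹ • (u - x) ∈ SubdiffE f x) : IsProx β f u x := by
  intro v
  have key : (1 / (2 * β) * ‖x - u‖ ^ 2 : ℝ)
      ≤ (inner ℝ (v - x) (β⁻¹ • (u - x)) : ℝ) + 1 / (2 * β) * ‖v - u‖ ^ 2 := by
    have hvu : v - u = (v - x) + (x - u) := by abel
    rw [hvu, real_inner_smul_right, norm_add_sq_real]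
    have h1 : (inner ℝ (v - x) (u - x) : ℝ) = - (inner ℝ (v - x) (x - u) : ℝ) := by
      rw [← inner_neg_right]; congr 1; abel
    have hb : (0:ℝ) < 1 / (2 * β) := by positivity
    have h2 : β⁻¹ = 2 * (1 / (2 * β)) := by field_simp
    have hring : β⁻¹ * (inner ℝ (v - x) (u - x) : ℝ)
        + 1 / (2 * β) * (‖v - x‖ ^ 2 + 2 * (inner ℝ (v - x) (x - u) : ℝ) + ‖x - u‖ ^ 2)
        - 1 / (2 * β) * ‖x - u‖ ^ 2 = 1 / (2 * β) * ‖v - x‖ ^ 2 := by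
      rw [h1, h2]; ring
    linarith [mul_nonneg hb.le (sq_nonneg ‖v - x‖)]
  calc f x + ((1 / (2 * β) * ‖x - u‖ ^ 2 : ℝ) : EReal)
      ≤ f x + (((inner ℝ (v - x) (β⁻¹ • (u - x)) : ℝ) + 1 / (2 * β) * ‖v - u‖ ^ 2 : ℝ) : EReal) :=
        add_le_add_right (EReal.coe_le_coe_iff.mpr key) _
    _ = (f x + ((inner ℝ (v - x) (β⁻¹ • (u - x)) : ℝ) : EReal)) + ((1 / (2 * β) * ‖v - u‖ ^ 2 : ℝ) : EReal) := by
        rw [EReal.coe_add, add_assoc]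
    _ ≤ f v + ((1 / (2 * β) * ‖v - u‖ ^ 2 : ℝ) : EReal) := add_le_add_left (hu v) _
end Aux

section Aux2
variable {H : Type*} [NormedAddCommGroup H] [InnerProductSpace ℝ H]

lemma prox_imp_subdiff (f : H → EReal) (hfp : ProperE f) (hfconv : ConvexE f)
    (β : ℝ) (hβ : 0 < β) (u x : H) (hp : IsProx β f u x) :
    β⁻¹ • (u - x) ∈ SubdiffE f x := by
  obtain ⟨hbot, z₀, hz₀⟩ := hfp
  have hxtop : f x ≠ ⊤ := by
    intro htop
    have h1 := hp z₀
    rw [htop, EReal.top_add_coe] at h1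
    exact (EReal.add_lt_top hz₀ (EReal.coe_ne_top _)).ne (top_le_iff.mp h1)
  set a : ℝ := (f x).toReal with ha
  have hfx : f x = (a : EReal) := (EReal.coe_toReal hxtop (hbot x)).symm
  intro z
  rcases eq_or_ne (f z) ⊤ with hzt | hzt
  · rw [hzt]; exact le_top
  set b : ℝ := (f z).toReal with hb
  have hfz : f z = (b : EReal) := (EReal.coe_toReal hzt (hbot z)).symm
  set ip : ℝ := inner ℝ (z - x) (u - x) with hip
  set D : ℝ := 1 / (2 * β) * ‖z - x‖ ^ 2 with hD
  have hall : ∀ t : ℝ, 0 < t → t ≤ 1 → a + β⁻¹ * ip - b ≤ t * D := by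
    intro t ht0 ht1
    have hcv : f ((1 - t) • x + t • z) ≤ (((1 - t) * a + t * b : ℝ) : EReal) := by
      have hc := hfconv x z (1 - t) t (by linarith) ht0.le (by ring)
      rw [hfx, hfz] at hc
      calc f ((1 - t) • x + t • z) ≤ ((1 - t : ℝ) : EReal) * (a : EReal) + (t : EReal) * (b : EReal) := hc
        _ = (((1 - t) * a + t * b : ℝ) : EReal) := by
            rw [EReal.coe_add, EReal.coe_mul, EReal.coe_mul]
    have hp' := hp ((1 - t) • x + t • z)
    rw [hfx] at hp'
    have hchain : ((a + 1 / (2 * β) * ‖x - u‖ ^ 2 : ℝ) : EReal)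
        ≤ (((1 - t) * a + t * b + 1 / (2 * β) * ‖(1 - t) • x + t • z - u‖ ^ 2 : ℝ) : EReal) := by
      rw [EReal.coe_add, EReal.coe_add]
      exact hp'.trans (add_le_add_left hcv _)
    have hr := EReal.coe_le_coe_iff.mp hchain
    have hv : (1 - t) • x + t • z - u = (x - u) + t • (z - x) := by
      rw [sub_smul, one_smul, smul_sub]; abel
    rw [hv, norm_add_sq_real, real_inner_smul_right, norm_smul, mul_pow,
      Real.norm_eq_abs, sq_abs] at hr
    have hip' : (inner ℝ (x - u) (z - x) : ℝ) = -ip := by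
      rw [hip, real_inner_comm, ← inner_neg_right]
      congr 1; abel
    rw [hip'] at hr
    have h2c : β⁻¹ = 2 * (1 / (2 * β)) := by field_simp
    have hmul : t * (a + β⁻¹ * ip - b) ≤ t * (t * D) := by
      rw [h2c, hD]; nlinarith [hr]
    exact le_of_mul_le_mul_left hmul ht0
  have hfinal : a + β⁻¹ * ip ≤ b := by
    by_contra hc
    push_neg at hc
    obtain ⟨ε, hε⟩ : ∃ ε : ℝ, ε = a + β⁻¹ * ip - b := ⟨_, rfl⟩
    have hε0 : 0 < ε := by rw [hε]; linarith
    rw [← hε] at hall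
    have hDnn : 0 ≤ D := by rw [hD]; positivity
    set t : ℝ := min 1 (ε / (D + 1)) with htdef
    have ht0 : 0 < t := lt_min one_pos (div_pos hε0 (by linarith))
    have ht1 : t ≤ 1 := min_le_left _ _
    have h1 := hall t ht0 ht1
    have h2 : t * D ≤ ε / (D + 1) * D :=
      mul_le_mul_of_nonneg_right (min_le_right _ _) hDnn
    have h3 : ε / (D + 1) * D < ε := by
      rw [div_mul_eq_mul_div, div_lt_iff₀ (by positivity)]
      nlinarith
    exact absurd (h1.trans h2) (not_le.mpr h3)
  rw [hfx, hfz, real_inner_smul_right, ← hip]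
  exact_mod_cast EReal.coe_le_coe_iff.mpr hfinal
end Aux2

theorem stationary_iff_prox {H : Type*} [NormedAddCommGroup H] [InnerProductSpace ℝ H] [CompleteSpace H]
    (f g : H → EReal) (h : H → ℝ) (h' : H → H) (β : ℝ) (hβ : 0 < β)
    (hfp : ProperE f) (hflsc : LowerSemicontinuous f) (hfconv : ConvexE f)
    (hgp : ProperE g) (hglsc : LowerSemicontinuous g) (hgconv : ConvexE g)
    (hconv : ConvexOn ℝ Set.univ h)
    (hgrad : ∀ x, HasGradientAt h (h' x) x)
    (x : H) :
    StationaryPt f g h' x ↔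
      ∃ y : H, IsProx β f y x ∧ IsProx β g ((2 : ℝ) • x - y + β • h' x) x := by
  have hβ' : β ≠ 0 := hβ.ne'
  constructor
  · rintro ⟨u, hu, v, hv, huv⟩
    refine ⟨x + β • u, ?_, ?_⟩
    · apply subdiff_imp_prox f β hβ
      have : β⁻¹ • (x + β • u - x) = u := by
        rw [add_sub_cancel_left, smul_smul, inv_mul_cancel₀ hβ', one_smul]
      rwa [this]
    · apply subdiff_imp_prox g β hβ
      have hveq : v = h' x - u := by
        have := sub_eq_zero.mp huv  -- u + v = h' x
        rw [← this]; abel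
      have : β⁻¹ • ((2 : ℝ) • x - (x + β • u) + β • h' x - x) = v := by
        rw [hveq]
        have hx : (2 : ℝ) • x - (x + β • u) + β • h' x - x = β • (h' x - u) := by
          rw [two_smul, smul_sub]; abel
        rw [hx, smul_smul, inv_mul_cancel₀ hβ', one_smul]
      rwa [this]
  · rintro ⟨y, hpf, hpg⟩
    refine ⟨β⁻¹ • (y - x), prox_imp_subdiff f hfp hfconv β hβ y x hpf,
      β⁻¹ • ((2 : ℝ) • x - y + β • h' x - x),
      prox_imp_subdiff g hgp hgconv β hβ _ x hpg, ?_⟩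
    have : (y - x) + ((2 : ℝ) • x - y + β • h' x - x) = β • h' x := by
      rw [two_smul]; abel
    rw [← smul_add, this, smul_smul, inv_mul_cancel₀ hβ', one_smul, sub_self]
end

section
/- Let f, g be proper lsc ρ-strongly convex functions on H and h convex differentiable with L-Lipschitz gradient, β, κ > 0. For u ∈ H, define y = prox_{βf}(u), z = prox_{βg}(2y - u + β∇h(y)), x = u + κ(z - y). Then for any stationary point x̄ of f + g - h, there exists ȳ with x̄ = prox_{βf}(ȳ) and x̄ = prox_{βg}(2x̄ - ȳ + β∇h(x̄)), and ‖x - ȳ‖² ≤ ‖u - ȳ‖² - βκ(2ρ - L)(‖y - x̄‖² + ‖z - x̄‖²) - κ(2 - κ)‖z - y‖². -/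
open InnerProductSpace Filter

section Aux
variable {H : Type*} [NormedAddCommGroup H] [InnerProductSpace ℝ H]

lemma aux_ne_top {f : H → EReal} {β : ℝ} {u y : H}
    (hfp : ProperE f) (hy : IsProx β f u y) : f y ≠ ⊤ := by
  obtain ⟨v, hvT⟩ := hfp.2
  intro hT
  have h := hy v
  rw [hT, EReal.top_add_coe] at h
  obtain ⟨rv, hrv⟩ : ∃ r : ℝ, f v = (r : EReal) := ⟨_, (EReal.coe_toReal hvT (hfp.1 v)).symm⟩
  rw [hrv, ← EReal.coe_add] at h
  exact (EReal.coe_lt_top _).not_ge h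

lemma nonpos_of_le_mul {G K : ℝ} (h : ∀ t : ℝ, 0 < t → t < 1 → G ≤ t * K) : G ≤ 0 := by
  by_contra hG
  push_neg at hG
  rcases le_or_gt K 0 with hK | hK
  · have := h (1/2) (by norm_num) (by norm_num)
    nlinarith
  · have ht : 0 < min (1/2) (G / (2*K)) := lt_min (by norm_num) (by positivity)
    have ht1 : min (1/2) (G/(2*K)) < 1 := lt_of_le_of_lt (min_le_left _ _) (by norm_num)
    have h2 := h _ ht ht1
    have h3 : min (1/2) (G/(2*K)) * K ≤ (G/(2*K)) * K :=
      mul_le_mul_of_nonneg_right (min_le_right _ _) hK.le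
    have h4 : (G/(2*K)) * K = G/2 := by field_simp
    nlinarith

lemma subdiff_isProx {f : H → EReal} {β : ℝ} (hβ : 0 < β) {x w : H}
    (hw : w ∈ SubdiffE f x) : IsProx β f (x + β • w) x := by
  intro v
  have h := hw v
  rcases eq_or_ne (f x) ⊥ with hxB | hxB
  · simp [hxB]
  rcases eq_or_ne (f v) ⊤ with hvT | hvT
  · rw [hvT, EReal.top_add_coe]; exact le_top
  have hvB : f v ≠ ⊥ := by
    intro hvB
    rw [hvB, le_bot_iff, EReal.add_eq_bot_iff] at h
    rcases h with h | h
    · exact hxB h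
    · exact EReal.coe_ne_bot _ h
  have hxT : f x ≠ ⊤ := by
    intro hxT
    rw [hxT, EReal.top_add_coe, top_le_iff] at h
    exact hvT h
  obtain ⟨rx, hrx⟩ : ∃ r : ℝ, f x = (r : EReal) := ⟨_, (EReal.coe_toReal hxT hxB).symm⟩
  obtain ⟨rv, hrv⟩ : ∃ r : ℝ, f v = (r : EReal) := ⟨_, (EReal.coe_toReal hvT hvB).symm⟩
  rw [hrx, hrv] at h ⊢
  have h' : rx + (inner ℝ (v - x) w : ℝ) ≤ rv := by exact_mod_cast h
  have goal : rx + 1/(2*β)*‖x - (x + β • w)‖^2 ≤ rv + 1/(2*β)*‖v - (x + β • w)‖^2 := by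
    have e1 : x - (x + β • w) = -(β • w) := by module
    have e2 : v - (x + β • w) = (v - x) - β • w := by module
    rw [e1, e2, norm_neg, norm_sub_sq_real, real_inner_smul_right]
    have hsm : ‖β • w‖^2 = β^2 * ‖w‖^2 := by
      rw [norm_smul, Real.norm_eq_abs, mul_pow, sq_abs]
    rw [hsm]
    have hq : 0 ≤ 1/(2*β) * ‖v - x‖^2 := by positivity
    have he : 1/(2*β)*(‖v-x‖^2 - 2*(β*(inner ℝ (v-x) w : ℝ)) + β^2*‖w‖^2)
        = 1/(2*β)*‖v-x‖^2 - (inner ℝ (v-x) w : ℝ) + 1/(2*β)*(β^2*‖w‖^2) := by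
      field_simp
    rw [he]
    linarith
  exact_mod_cast goal

end Aux

section Aux2
variable {H : Type*} [NormedAddCommGroup H] [InnerProductSpace ℝ H]

lemma strong_prox {f : H → EReal} {ρ β : ℝ} (hβ : 0 < β)
    (hfp : ProperE f) (hfsc : StrongConvexE ρ f) {u y : H} (hy : IsProx β f u y)
    (v : H) (hvT : f v ≠ ⊤) :
    β * (f y).toReal + β * ρ / 2 * ‖v - y‖ ^ 2
      ≤ β * (f v).toReal + (inner ℝ (y - u) (v - y) : ℝ) := by
  have hyT : f y ≠ ⊤ := aux_ne_top hfp hy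
  obtain ⟨ry, hry⟩ : ∃ r : ℝ, f y = (r : EReal) := ⟨_, (EReal.coe_toReal hyT (hfp.1 y)).symm⟩
  obtain ⟨rv, hrv⟩ : ∃ r : ℝ, f v = (r : EReal) := ⟨_, (EReal.coe_toReal hvT (hfp.1 v)).symm⟩
  rw [hry, hrv, EReal.toReal_coe, EReal.toReal_coe]
  set Q := ‖v - y‖ ^ 2 with hQ
  set W := (inner ℝ (y - u) (v - y) : ℝ) with hW
  have key : ∀ t : ℝ, 0 < t → t < 1 →
      2*β*ry - 2*β*rv - 2*W + β*ρ*Q ≤ t * (β*ρ*Q + Q) := by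
    intro t ht0 ht1
    set p := (1 - t) • y + t • v with hp
    have hsc := hfsc y v (1-t) t (by linarith) ht0.le (by ring)
    simp only at hsc
    rw [← hp, hry, hrv] at hsc
    have hRHS : ((1-t : ℝ) : EReal) * ((ry:EReal) - ((ρ/2*‖y‖^2 : ℝ):EReal))
        + ((t:ℝ):EReal) * ((rv:EReal) - ((ρ/2*‖v‖^2:ℝ):EReal))
        = (((1-t)*(ry - ρ/2*‖y‖^2) + t*(rv - ρ/2*‖v‖^2) : ℝ) : EReal) := by norm_cast
    rw [hRHS] at hsc
    have hpT : f p ≠ ⊤ := by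
      intro hT
      rw [hT, EReal.top_sub_coe, top_le_iff] at hsc
      exact EReal.coe_ne_top _ hsc
    obtain ⟨rp, hrp⟩ : ∃ r : ℝ, f p = (r : EReal) := ⟨_, (EReal.coe_toReal hpT (hfp.1 p)).symm⟩
    rw [hrp] at hsc
    have hsc' : rp - ρ/2*‖p‖^2 ≤ (1-t)*(ry - ρ/2*‖y‖^2) + t*(rv - ρ/2*‖v‖^2) := by
      exact_mod_cast hsc
    have hpx := hy p
    rw [hry, hrp] at hpx
    have hpx' : ry + 1/(2*β)*‖y-u‖^2 ≤ rp + 1/(2*β)*‖p-u‖^2 := by exact_mod_cast hpx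
    have e : ∀ X : ℝ, 2*β*(1/(2*β)*X) = X := fun X => by field_simp
    have hpx2 : 2*β*ry + ‖y-u‖^2 ≤ 2*β*rp + ‖p-u‖^2 := by
      have hm := mul_le_mul_of_nonneg_left hpx' (by positivity : (0:ℝ) ≤ 2*β)
      calc 2*β*ry + ‖y-u‖^2 = 2*β*(ry + 1/(2*β)*‖y-u‖^2) := by rw [mul_add, e]
        _ ≤ 2*β*(rp + 1/(2*β)*‖p-u‖^2) := hm
        _ = 2*β*rp + ‖p-u‖^2 := by rw [mul_add, e]
    have hsm : ∀ (s : ℝ) (w : H), ‖s • w‖^2 = s^2 * ‖w‖^2 := fun s w => by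
      rw [norm_smul, Real.norm_eq_abs, mul_pow, sq_abs]
    have hpe : p = y + t • (v - y) := by rw [hp]; module
    have hp1 : ‖p‖^2 = ‖y‖^2 + 2*(t*(inner ℝ y (v-y):ℝ)) + t^2*Q := by
      rw [hpe, norm_add_sq_real, real_inner_smul_right, hsm, hQ]
    have hp2 : ‖p-u‖^2 = ‖y-u‖^2 + 2*(t*(inner ℝ (y-u) (v-y):ℝ)) + t^2*Q := by
      have e2 : p - u = (y - u) + t • (v - y) := by rw [hpe]; module
      rw [e2, norm_add_sq_real, real_inner_smul_right, hsm, hQ]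
    have hv2 : ‖v‖^2 = ‖y‖^2 + 2*(inner ℝ y (v-y):ℝ) + Q := by
      have e3 : v = y + (v - y) := by module
      conv_lhs => rw [e3]
      rw [norm_add_sq_real, hQ]
    rw [hp2, ← hW] at hpx2
    rw [hp1, hv2] at hsc'
    have hsc2 := mul_le_mul_of_nonneg_left hsc' (by positivity : (0:ℝ) ≤ 2*β)
    have hmain : t * (2*β*ry - 2*β*rv - 2*W + β*ρ*Q) ≤ t * (t * (β*ρ*Q + Q)) := by
      nlinarith [hpx2, hsc2]
    exact le_of_mul_le_mul_left hmain ht0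
  have hfin := nonpos_of_le_mul key
  linarith

end Aux2

set_option maxHeartbeats 1000000 in
theorem dr_one_step_fejer {H : Type*} [NormedAddCommGroup H] [InnerProductSpace ℝ H] [CompleteSpace H]
    (f g : H → EReal) (h : H → ℝ) (h' : H → H) (ρ L β κ : ℝ)
    (hρ : 0 < ρ) (hL : 0 < L) (hβ : 0 < β) (hκ : 0 < κ)
    (hfp : ProperE f) (hflsc : LowerSemicontinuous f) (hfsc : StrongConvexE ρ f)
    (hgp : ProperE g) (hglsc : LowerSemicontinuous g) (hgsc : StrongConvexE ρ g)
    (hconv : ConvexOn ℝ Set.univ h)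
    (hgrad : ∀ w, HasGradientAt h (h' w) w)
    (hlip : LipschitzWith (Real.toNNReal L) h')
    (u y z x xbar : H)
    (hy : IsProx β f u y)
    (hz : IsProx β g ((2 : ℝ) • y - u + β • h' y) z)
    (hx : x = u + κ • (z - y))
    (hxbar : StationaryPt f g h' xbar) :
    ∃ ybar : H, IsProx β f ybar xbar ∧
      IsProx β g ((2 : ℝ) • xbar - ybar + β • h' xbar) xbar ∧
      ‖x - ybar‖ ^ 2 ≤ ‖u - ybar‖ ^ 2
        - β * κ * (2 * ρ - L) * (‖y - xbar‖ ^ 2 + ‖z - xbar‖ ^ 2)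
        - κ * (2 - κ) * ‖z - y‖ ^ 2 := by
  obtain ⟨ub, hub, vb, hvb, hsum⟩ := hxbar
  set ybar : H := xbar + β • ub with hybar
  have hprox1 : IsProx β f ybar xbar := subdiff_isProx hβ hub
  have hhx : h' xbar = ub + vb := (sub_eq_zero.mp hsum).symm
  have hwbar : (2:ℝ) • xbar - ybar + β • h' xbar = xbar + β • vb := by
    rw [hybar, hhx]; module
  have hprox2 : IsProx β g ((2:ℝ) • xbar - ybar + β • h' xbar) xbar := by
    rw [hwbar]; exact subdiff_isProx hβ hvb
  refine ⟨ybar, hprox1, hprox2, ?_⟩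
  have hfyT : f y ≠ ⊤ := aux_ne_top hfp hy
  have hfxT : f xbar ≠ ⊤ := aux_ne_top hfp hprox1
  have hgzT : g z ≠ ⊤ := aux_ne_top hgp hz
  have hgxT : g xbar ≠ ⊤ := aux_ne_top hgp hprox2
  have hA := strong_prox hβ hfp hfsc hy xbar hfxT
  have hB := strong_prox hβ hfp hfsc hprox1 y hfyT
  have hC := strong_prox hβ hgp hgsc hz xbar hgxT
  have hD := strong_prox hβ hgp hgsc hprox2 z hgzT
  rw [norm_sub_rev xbar y] at hA
  rw [norm_sub_rev xbar z] at hC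
  -- inner ℝ product identities
  have eA : (inner ℝ (y - u) (xbar - y) : ℝ) + (inner ℝ (xbar - ybar) (y - xbar) : ℝ)
      = (inner ℝ (u - ybar) (y - xbar) : ℝ) - ‖y - xbar‖^2 := by
    rw [show y - u = -(u - y) from (neg_sub _ _).symm,
        show xbar - y = -(y - xbar) from (neg_sub _ _).symm,
        inner_neg_neg, ← inner_add_left,
        show (u - y) + (xbar - ybar) = (u - ybar) - (y - xbar) by module,
        inner_sub_left, real_inner_self_eq_norm_sq]
  have hI1 : β*ρ*‖y-xbar‖^2 ≤ (inner ℝ (u - ybar) (y - xbar) : ℝ) - ‖y-xbar‖^2 := by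
    linarith [hA, hB, eA]
  have eC : (inner ℝ (z - ((2:ℝ) • y - u + β • h' y)) (xbar - z) : ℝ)
      + (inner ℝ (xbar - ((2:ℝ) • xbar - ybar + β • h' xbar)) (z - xbar) : ℝ)
      = 2*(inner ℝ (y-xbar) (z-xbar) : ℝ) - ‖z-xbar‖^2 - (inner ℝ (u-ybar) (z-xbar) : ℝ)
        + β*(inner ℝ (h' y - h' xbar) (z-xbar) : ℝ) := by
    rw [show z - ((2:ℝ) • y - u + β • h' y) = -(((2:ℝ) • y - u + β • h' y) - z) from (neg_sub _ _).symm,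
        show xbar - z = -(z - xbar) from (neg_sub _ _).symm,
        inner_neg_neg, ← inner_add_left,
        show (((2:ℝ) • y - u + β • h' y) - z) + (xbar - ((2:ℝ) • xbar - ybar + β • h' xbar))
          = ((2:ℝ) • (y - xbar) - (z - xbar) - (u - ybar)) + β • (h' y - h' xbar) by module,
        inner_add_left, inner_sub_left, inner_sub_left, real_inner_smul_left,
        real_inner_smul_left, real_inner_self_eq_norm_sq]
  have hI2 : β*ρ*‖z-xbar‖^2 ≤ 2*(inner ℝ (y-xbar) (z-xbar) : ℝ) - ‖z-xbar‖^2
      - (inner ℝ (u-ybar) (z-xbar) : ℝ) + β*(inner ℝ (h' y - h' xbar) (z-xbar) : ℝ) := by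
    linarith [hC, hD, eC]
  -- Lipschitz bound
  have hlipb : ‖h' y - h' xbar‖ ≤ L * ‖y - xbar‖ := by
    have hd := hlip.dist_le_mul y xbar
    rw [dist_eq_norm, dist_eq_norm, Real.coe_toNNReal L hL.le] at hd
    exact hd
  have hI3 : (inner ℝ (h' y - h' xbar) (z - xbar) : ℝ) ≤ L/2 * (‖y-xbar‖^2 + ‖z-xbar‖^2) := by
    have h1 := real_inner_le_norm (h' y - h' xbar) (z - xbar)
    have h2 : ‖h' y - h' xbar‖ * ‖z - xbar‖ ≤ (L*‖y - xbar‖) * ‖z - xbar‖ :=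
      mul_le_mul_of_nonneg_right hlipb (norm_nonneg _)
    nlinarith [mul_nonneg hL.le (sq_nonneg (‖y-xbar‖ - ‖z-xbar‖))]
  have hI3' := mul_le_mul_of_nonneg_left hI3 hβ.le
  have hJ : (inner ℝ (u-ybar) (z-xbar):ℝ) - (inner ℝ (u-ybar) (y-xbar):ℝ) ≤
      -(β*ρ)*(‖y-xbar‖^2+‖z-xbar‖^2) - (‖y-xbar‖^2+‖z-xbar‖^2)
      + 2*(inner ℝ (y-xbar) (z-xbar):ℝ) + β*(L/2*(‖y-xbar‖^2+‖z-xbar‖^2)) := by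
    linarith
  have hJ2 := mul_le_mul_of_nonneg_left hJ (by positivity : (0:ℝ) ≤ 2*κ)
  -- goal expansion
  have hsm : ∀ (s : ℝ) (w : H), ‖s • w‖^2 = s^2 * ‖w‖^2 := fun s w => by
    rw [norm_smul, Real.norm_eq_abs, mul_pow, sq_abs]
  have hxv : x - ybar = (u - ybar) + κ • ((z - xbar) - (y - xbar)) := by
    rw [hx]; module
  have hE1 : ‖x - ybar‖^2 = ‖u-ybar‖^2
      + 2*(κ*((inner ℝ (u-ybar) (z-xbar):ℝ) - (inner ℝ (u-ybar) (y-xbar):ℝ)))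
      + κ^2*‖(z-xbar)-(y-xbar)‖^2 := by
    rw [hxv, norm_add_sq_real, real_inner_smul_right, inner_sub_right, hsm]
  have hE2 : ‖(z-xbar)-(y-xbar)‖^2 = ‖z-xbar‖^2 - 2*(inner ℝ (y-xbar) (z-xbar):ℝ) + ‖y-xbar‖^2 := by
    rw [norm_sub_sq_real, real_inner_comm (z-xbar)]
  have hzy : z - y = (z - xbar) - (y - xbar) := by module
  rw [hzy, hE1, hE2]
  nlinarith [hJ2]
end

section
/- Let h : H → ℝ be convex differentiable with L-Lipschitz gradient, and let z, x̄, y, plus ρ-strong monotonicity hold in the sense that ρ‖z - x̄‖² ≤ ⟨z - x̄, ∇h(y) - ∇h(x̄) + (1/β)(2y - z - u) - (1/β)(x̄ - ȳ)⟩ for β > 0. Then 2⟨u - ȳ, z - x̄⟩ ≤ (βL - 2βρ)‖z - x̄‖² + (2 + βL)‖y - x̄‖² - 2‖z - y‖². -/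
open InnerProductSpace Filter

theorem cross_term_estimate {H : Type*} [NormedAddCommGroup H] [InnerProductSpace ℝ H] [CompleteSpace H]
    (h : H → ℝ) (h' : H → H) (L ρ β : ℝ) (hL : 0 < L) (hρ : 0 < ρ) (hβ : 0 < β)
    (hconv : ConvexOn ℝ Set.univ h)
    (hgrad : ∀ w, HasGradientAt h (h' w) w)
    (hlip : LipschitzWith (Real.toNNReal L) h')
    (u ybar z y xbar : H)
    (hmono : ρ * ‖z - xbar‖ ^ 2
        ≤ (inner ℝ (z - xbar)
            (h' y - h' xbar + (1 / β) • ((2 : ℝ) • y - z - u) - (1 / β) • (xbar - ybar)) : ℝ)) :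
    2 * (inner ℝ (u - ybar) (z - xbar) : ℝ)
      ≤ (β * L - 2 * β * ρ) * ‖z - xbar‖ ^ 2 + (2 + β * L) * ‖y - xbar‖ ^ 2
        - 2 * ‖z - y‖ ^ 2 := by
  have hlip' : ‖h' y - h' xbar‖ ≤ L * ‖y - xbar‖ := by
    have := hlip.dist_le_mul y xbar
    simpa [dist_eq_norm, Real.coe_toNNReal L hL.le] using this
  have h1 : (inner ℝ (z - xbar) (h' y - h' xbar) : ℝ)
      ≤ L / 2 * ‖z - xbar‖ ^ 2 + L / 2 * ‖y - xbar‖ ^ 2 := by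
    calc (inner ℝ (z - xbar) (h' y - h' xbar) : ℝ) ≤ ‖z - xbar‖ * ‖h' y - h' xbar‖ :=
          real_inner_le_norm _ _
      _ ≤ ‖z - xbar‖ * (L * ‖y - xbar‖) :=
          mul_le_mul_of_nonneg_left hlip' (norm_nonneg _)
      _ ≤ L / 2 * ‖z - xbar‖ ^ 2 + L / 2 * ‖y - xbar‖ ^ 2 := by
          nlinarith [sq_nonneg (‖z - xbar‖ - ‖y - xbar‖), norm_nonneg (z - xbar),
            norm_nonneg (y - xbar), hL.le]
  have e1 : ‖y - xbar‖ ^ 2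
      = ‖z - xbar‖ ^ 2 + 2 * (inner ℝ (z - xbar) (y - z) : ℝ) + ‖y - z‖ ^ 2 := by
    have := norm_add_sq_real (z - xbar) (y - z)
    rw [show z - xbar + (y - z) = y - xbar by abel] at this
    linarith
  have e2 : (inner ℝ (z - xbar) ((2 : ℝ) • y - z - xbar) : ℝ)
      = ‖z - xbar‖ ^ 2 + 2 * (inner ℝ (z - xbar) (y - z) : ℝ) := by
    have h3 : ((2 : ℝ) • y - z - xbar) = (z - xbar) + (2 : ℝ) • (y - z) := by
      module
    rw [h3, inner_add_right, real_inner_smul_right, real_inner_self_eq_norm_sq]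
  have hexp : (inner ℝ (z - xbar)
        (h' y - h' xbar + (1 / β) • ((2 : ℝ) • y - z - u) - (1 / β) • (xbar - ybar)) : ℝ)
      = (inner ℝ (z - xbar) (h' y - h' xbar) : ℝ)
        + (1 / β) * (inner ℝ (z - xbar) ((2 : ℝ) • y - z - xbar) : ℝ)
        - (1 / β) * (inner ℝ (z - xbar) (u - ybar) : ℝ) := by
    simp only [inner_add_right, inner_sub_right, real_inner_smul_right, inner_smul_right]
    ring
  rw [hexp] at hmono
  have hcomm : (inner ℝ (u - ybar) (z - xbar) : ℝ) = (inner ℝ (z - xbar) (u - ybar) : ℝ) :=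
    real_inner_comm _ _
  rw [hcomm]
  have hmono' := mul_le_mul_of_nonneg_left hmono hβ.le
  have hβ' : β * (1 / β) = 1 := by field_simp
  simp only [mul_sub, mul_add, ← mul_assoc, hβ', one_mul] at hmono'
  have hz : ‖z - y‖ = ‖y - z‖ := by rw [← norm_neg]; congr 1; abel
  rw [hz]
  have hb1 : β * (inner ℝ (z - xbar) (h' y - h' xbar) : ℝ)
      ≤ β * L / 2 * ‖z - xbar‖ ^ 2 + β * L / 2 * ‖y - xbar‖ ^ 2 := by
    nlinarith [mul_le_mul_of_nonneg_left h1 hβ.le]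
  nlinarith [hmono', hb1, e1, e2, mul_pos hβ hρ]
end

section
/- Let K be a nonempty subset of a real Hilbert space H and (xₙ) a bounded sequence in H such that (i) lim ‖xₙ - x‖ exists for every x ∈ K, and (ii) every weak cluster point of (xₙ) lies in K. Then (xₙ) converges weakly to a point of K. -/
open InnerProductSpace Filter

section OpialHelpers

variable {H : Type*} [NormedAddCommGroup H] [InnerProductSpace ℝ H] [CompleteSpace H]

/-- Along any ultrafilter, a bounded sequence has a weak limit. -/
lemma opial_ultra_weak_limit (y : ℕ → H) (M : ℝ) (hM : ∀ n, ‖y n‖ ≤ M) (U : Ultrafilter ℕ) :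
    ∃ p : H, ‖p‖ ≤ M ∧
      ∀ v : H, Tendsto (fun n => (inner ℝ v (y n) : ℝ)) (U : Filter ℕ) (nhds (inner ℝ v p : ℝ)) := by
  have hM0 : (0 : ℝ) ≤ M := le_trans (norm_nonneg _) (hM 0)
  have key : ∀ v : H, ∃ a : ℝ,
      Tendsto (fun n => (inner ℝ v (y n) : ℝ)) (U : Filter ℕ) (nhds a) := by
    intro v
    have hmem : (Set.Icc (-(‖v‖ * M)) (‖v‖ * M)) ∈ U.map (fun n => (inner ℝ v (y n) : ℝ)) := by
      refine Filter.mem_map.2 (Filter.univ_mem' fun n => ?_)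
      have h1 : |(inner ℝ v (y n) : ℝ)| ≤ ‖v‖ * M :=
        le_trans (abs_real_inner_le_norm v (y n))
          (mul_le_mul_of_nonneg_left (hM n) (norm_nonneg v))
      exact abs_le.1 h1
    obtain ⟨a, _, ha⟩ := isCompact_Icc.ultrafilter_le_nhds
      (U.map (fun n => (inner ℝ v (y n) : ℝ))) (Filter.le_principal_iff.2 hmem)
    refine ⟨a, ?_⟩
    rwa [Ultrafilter.coe_map] at ha
  choose F hF using key
  have hbound : ∀ v : H, |F v| ≤ M * ‖v‖ := by
    intro v
    refine le_of_tendsto (hF v).abs (Filter.Eventually.of_forall fun n => ?_)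
    calc |(inner ℝ v (y n) : ℝ)| ≤ ‖v‖ * ‖y n‖ := abs_real_inner_le_norm v (y n)
      _ ≤ ‖v‖ * M := mul_le_mul_of_nonneg_left (hM n) (norm_nonneg v)
      _ = M * ‖v‖ := mul_comm _ _
  have hadd : ∀ v w : H, F (v + w) = F v + F w := by
    intro v w
    refine tendsto_nhds_unique (hF (v + w)) ?_
    have := (hF v).add (hF w)
    simpa [inner_add_left] using this
  have hsmul : ∀ (c : ℝ) (v : H), F (c • v) = c * F v := by
    intro c v
    refine tendsto_nhds_unique (hF (c • v)) ?_
    have := (hF v).const_mul c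
    simpa [real_inner_smul_left] using this
  let flin : H →ₗ[ℝ] ℝ :=
    { toFun := F, map_add' := hadd, map_smul' := hsmul }
  let f : H →L[ℝ] ℝ := flin.mkContinuous M (fun v => by
    simpa [Real.norm_eq_abs, flin] using hbound v)
  refine ⟨(InnerProductSpace.toDual ℝ H).symm f, ?_, ?_⟩
  · calc ‖(InnerProductSpace.toDual ℝ H).symm f‖ = ‖f‖ :=
        LinearIsometryEquiv.norm_map _ f
      _ ≤ M := LinearMap.mkContinuous_norm_le _ hM0 _
  · intro v
    have h1 : (inner ℝ v ((InnerProductSpace.toDual ℝ H).symm f) : ℝ) = F v := by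
      rw [real_inner_comm, InnerProductSpace.toDual_symm_apply]
      rfl
    rw [h1]
    exact hF v

/-- Weak convergence of a bounded sequence can be tested on a dense subset. -/
lemma opial_dense_test {y : ℕ → H} {p : H} {M : ℝ} (hM : ∀ n, ‖y n‖ ≤ M) (hp : ‖p‖ ≤ M)
    {S : Set H}
    (hS : ∀ w ∈ S, Tendsto (fun n => (inner ℝ w (y n) : ℝ)) atTop (nhds (inner ℝ w p : ℝ)))
    {v : H} (hv : v ∈ closure S) :
    Tendsto (fun n => (inner ℝ v (y n) : ℝ)) atTop (nhds (inner ℝ v p : ℝ)) := by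
  have hM0 : (0 : ℝ) ≤ M := le_trans (norm_nonneg _) (hM 0)
  rw [Metric.tendsto_atTop]
  intro ε hε
  obtain ⟨w, hwS, hw⟩ := Metric.mem_closure_iff.1 hv (ε / (3 * (M + 1))) (by positivity)
  obtain ⟨N, hN⟩ := Metric.tendsto_atTop.1 (hS w hwS) (ε / 3) (by positivity)
  refine ⟨N, fun n hn => ?_⟩
  have hvw : ‖v - w‖ < ε / (3 * (M + 1)) := by rwa [dist_eq_norm] at hw
  have hb : ∀ u : H, ‖u‖ ≤ M → |(inner ℝ (v - w) u : ℝ)| < ε / 3 := by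
    intro u hu
    have h1 : |(inner ℝ (v - w) u : ℝ)| ≤ ‖v - w‖ * M :=
      le_trans (abs_real_inner_le_norm _ _)
        (mul_le_mul_of_nonneg_left hu (norm_nonneg _))
    have h2 : ‖v - w‖ * M < ε / 3 := by
      calc ‖v - w‖ * M ≤ ‖v - w‖ * (M + 1) := by nlinarith [norm_nonneg (v - w)]
        _ < ε / (3 * (M + 1)) * (M + 1) :=
            mul_lt_mul_of_pos_right hvw (by positivity)
        _ = ε / 3 := by field_simp
    linarith
  have h1 := hb (y n) (hM n)
  have h2 := hb p hp
  have h3 := hN n hn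
  rw [Real.dist_eq] at h3 ⊢
  have key : (inner ℝ v (y n) : ℝ) - (inner ℝ v p : ℝ) =
      (inner ℝ (v - w) (y n) : ℝ) + ((inner ℝ w (y n) : ℝ) - (inner ℝ w p : ℝ))
        - (inner ℝ (v - w) p : ℝ) := by
    simp only [inner_sub_left]
    ring
  rw [key]
  have t1 : |(inner ℝ (v - w) (y n) : ℝ) + ((inner ℝ w (y n) : ℝ) - (inner ℝ w p : ℝ))
      - (inner ℝ (v - w) p : ℝ)|
      ≤ |(inner ℝ (v - w) (y n) : ℝ)| + |(inner ℝ w (y n) : ℝ) - (inner ℝ w p : ℝ)|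
        + |(inner ℝ (v - w) p : ℝ)| := by
    calc |_ + _ - _| ≤ |(inner ℝ (v - w) (y n) : ℝ) + ((inner ℝ w (y n) : ℝ) - (inner ℝ w p : ℝ))|
          + |(inner ℝ (v - w) p : ℝ)| := abs_sub _ _
      _ ≤ _ + _ + _ := by gcongr; exact abs_add_le _ _
  linarith

/-- Every bounded sequence in a Hilbert space has a weakly convergent subsequence. -/
lemma opial_weak_subseq (y : ℕ → H) (M : ℝ) (hM : ∀ n, ‖y n‖ ≤ M) :
    ∃ p : H, ‖p‖ ≤ M ∧ ∃ φ : ℕ → ℕ, StrictMono φ ∧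
      ∀ v : H, Tendsto (fun n => (inner ℝ v (y (φ n)) : ℝ)) atTop (nhds (inner ℝ v p : ℝ)) := by
  classical
  set U : Ultrafilter ℕ := Ultrafilter.of atTop with hU
  obtain ⟨p, hpM, hp⟩ := opial_ultra_weak_limit y M hM U
  set V : Submodule ℝ H := (Submodule.span ℝ (Set.range y)).topologicalClosure with hV
  have hymem : ∀ n, y n ∈ V := fun n =>
    Submodule.le_topologicalClosure _ (Submodule.subset_span (Set.mem_range_self n))
  have hpV : p ∈ V := by
    rw [hV, ← Submodule.orthogonal_orthogonal_eq_closure]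
    rw [Submodule.mem_orthogonal]
    intro u hu
    have hzero : ∀ n, (inner ℝ u (y n) : ℝ) = 0 := fun n =>
      (Submodule.mem_orthogonal' _ u).1 hu (y n)
        (Submodule.subset_span (Set.mem_range_self n))
    have h0 : Tendsto (fun _ : ℕ => (0 : ℝ)) (U : Filter ℕ) (nhds (inner ℝ u p : ℝ)) := by
      simpa only [hzero] using hp u
    exact tendsto_nhds_unique h0 tendsto_const_nhds
  -- countable dense family in V
  have hsep : TopologicalSpace.IsSeparable
      ((Submodule.span ℝ (Set.range y) : Submodule ℝ H) : Set H) :=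
    (Set.countable_range y).isSeparable.span
  obtain ⟨c, hc, hsub⟩ := hsep
  obtain ⟨d, hd⟩ := (hc.insert (0 : H)).exists_eq_range ⟨0, Set.mem_insert _ _⟩
  have hsubV : (V : Set H) ⊆ closure (Set.range d) := by
    rw [hV, Submodule.topologicalClosure_coe]
    refine (closure_minimal hsub isClosed_closure).trans ?_
    rw [← hd]
    exact closure_mono (Set.subset_insert _ _)
  -- diagonal extraction
  have hgood : ∀ n N : ℕ, ∃ m, N < m ∧
      ∀ k ≤ n, |(inner ℝ (d k) (y m) : ℝ) - (inner ℝ (d k) p : ℝ)| < 1 / (n + 1) := by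
    intro n N
    have hε : (0 : ℝ) < 1 / (n + 1) := by positivity
    have h1 : ∀ k : ℕ,
        {m | |(inner ℝ (d k) (y m) : ℝ) - (inner ℝ (d k) p : ℝ)| < 1 / (n + 1)}
          ∈ (U : Filter ℕ) := by
      intro k
      filter_upwards [Metric.tendsto_nhds.1 (hp (d k)) _ hε] with m hm
      rwa [Real.dist_eq] at hm
    have h2 : {m | ∀ k ≤ n,
        |(inner ℝ (d k) (y m) : ℝ) - (inner ℝ (d k) p : ℝ)| < 1 / (n + 1)}
          ∈ (U : Filter ℕ) := by
      have := (Filter.eventually_all_finset (Finset.range (n + 1))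
        (l := (U : Filter ℕ))
        (p := fun k m => |(inner ℝ (d k) (y m) : ℝ) - (inner ℝ (d k) p : ℝ)| < 1 / (n + 1))).2
        (fun k _ => h1 k)
      filter_upwards [this] with m hm k hk
      exact hm k (Finset.mem_range.2 (Nat.lt_succ_of_le hk))
    have h3 : {m | N < m} ∈ (U : Filter ℕ) :=
      Ultrafilter.of_le atTop (Filter.eventually_gt_atTop N)
    obtain ⟨m, hm⟩ := Ultrafilter.nonempty_of_mem (Filter.inter_mem h3 h2)
    exact ⟨m, hm.1, hm.2⟩
  choose g hg1 hg2 using hgood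
  let φ : ℕ → ℕ := fun n => Nat.rec (g 0 0) (fun n ih => g (n + 1) ih) n
  have hφs : StrictMono φ := strictMono_nat_of_lt_succ (fun n => hg1 (n + 1) (φ n))
  have hφgood : ∀ n, ∀ k ≤ n,
      |(inner ℝ (d k) (y (φ n)) : ℝ) - (inner ℝ (d k) p : ℝ)| < 1 / (n + 1) := by
    intro n
    cases n with
    | zero => exact hg2 0 0
    | succ n => exact hg2 (n + 1) (φ n)
  have hdk : ∀ k, Tendsto (fun n => (inner ℝ (d k) (y (φ n)) : ℝ)) atTop
      (nhds (inner ℝ (d k) p : ℝ)) := by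
    intro k
    rw [Metric.tendsto_atTop]
    intro ε hε
    obtain ⟨N0, hN0⟩ := exists_nat_gt (1 / ε)
    refine ⟨max k N0, fun n hn => ?_⟩
    have hk : k ≤ n := le_trans (le_max_left _ _) hn
    have h := hφgood n k hk
    rw [Real.dist_eq]
    have hn0 : (N0 : ℝ) ≤ n := Nat.cast_le.2 (le_trans (le_max_right _ _) hn)
    have h2 : (1 : ℝ) / ε < (n : ℝ) + 1 := by linarith
    have h4 : (1 : ℝ) < ((n : ℝ) + 1) * ε := (div_lt_iff₀ hε).1 h2
    have h3 : 1 / ((n : ℝ) + 1) < ε := (div_lt_iff₀ (by positivity)).2 (by linarith)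
    exact h.trans h3
  refine ⟨p, hpM, φ, hφs, ?_⟩
  have hMφ : ∀ n, ‖y (φ n)‖ ≤ M := fun n => hM _
  have hdense : ∀ v ∈ (V : Set H),
      Tendsto (fun n => (inner ℝ v (y (φ n)) : ℝ)) atTop (nhds (inner ℝ v p : ℝ)) := by
    intro v hv
    refine opial_dense_test hMφ hpM ?_ (hsubV hv)
    rintro w ⟨k, rfl⟩
    exact hdk k
  intro v
  haveI : CompleteSpace V := (Submodule.isClosed_topologicalClosure _).completeSpace_coe
  set w : H := (V.orthogonalProjectionOnto v : H) with hwdef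
  have hwV : w ∈ V := SetLike.coe_mem _
  have hperp : v - w ∈ Vᗮ := V.sub_starProjection_mem_orthogonal v
  have h1 : ∀ m, (inner ℝ v (y m) : ℝ) = (inner ℝ w (y m) : ℝ) := by
    intro m
    have h0 : (inner ℝ (v - w) (y m) : ℝ) = 0 :=
      (Submodule.mem_orthogonal' _ _).1 hperp (y m) (hymem m)
    rw [inner_sub_left] at h0
    linarith
  have h2 : (inner ℝ v p : ℝ) = (inner ℝ w p : ℝ) := by
    have h0 : (inner ℝ (v - w) p : ℝ) = 0 :=
      (Submodule.mem_orthogonal' _ _).1 hperp p hpV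
    rw [inner_sub_left] at h0
    linarith
  simp only [h1, h2]
  exact hdense w hwV

end OpialHelpers

theorem opial_lemma {H : Type*} [NormedAddCommGroup H] [InnerProductSpace ℝ H]
    [CompleteSpace H]
    (K : Set H) (hK : K.Nonempty) (x : ℕ → H)
    (hbdd : ∃ M : ℝ, ∀ n, ‖x n‖ ≤ M)
    (hlim : ∀ z ∈ K, ∃ l : ℝ, Tendsto (fun n => ‖x n - z‖) atTop (nhds l))
    (hcluster : ∀ p : H, (∃ φ : ℕ → ℕ, StrictMono φ ∧ WeakTendsto (x ∘ φ) p) → p ∈ K) :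
    ∃ p ∈ K, WeakTendsto x p := by
  classical
  obtain ⟨M, hM⟩ := hbdd
  -- characterization of weak convergence via inner ℝ products
  have weak_of : ∀ (y : ℕ → H) (p : H),
      (∀ v : H, Tendsto (fun n => (inner ℝ v (y n) : ℝ)) atTop (nhds (inner ℝ v p : ℝ))) →
      WeakTendsto y p := by
    intro y p h ψ
    have hv := h ((InnerProductSpace.toDual ℝ H).symm ψ)
    simpa only [InnerProductSpace.toDual_symm_apply] using hv
  -- inner ℝ products against differences of points of K converge
  have stepA : ∀ z₁ ∈ K, ∀ z₂ ∈ K, ∃ c : ℝ,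
      Tendsto (fun n => (inner ℝ (z₁ - z₂) (x n) : ℝ)) atTop (nhds c) := by
    intro z₁ hz₁ z₂ hz₂
    obtain ⟨l₁, hl₁⟩ := hlim z₁ hz₁
    obtain ⟨l₂, hl₂⟩ := hlim z₂ hz₂
    refine ⟨(l₂ ^ 2 - l₁ ^ 2 - ‖z₂‖ ^ 2 + ‖z₁‖ ^ 2) / 2, ?_⟩
    have h2 : Tendsto
        (fun n => (‖x n - z₂‖ ^ 2 - ‖x n - z₁‖ ^ 2 - ‖z₂‖ ^ 2 + ‖z₁‖ ^ 2) / 2) atTop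
        (nhds ((l₂ ^ 2 - l₁ ^ 2 - ‖z₂‖ ^ 2 + ‖z₁‖ ^ 2) / 2)) :=
      ((((hl₂.pow 2).sub (hl₁.pow 2)).sub_const (‖z₂‖ ^ 2)).add_const (‖z₁‖ ^ 2)).div_const 2
    have heq : ∀ n, (inner ℝ (z₁ - z₂) (x n) : ℝ) =
        (‖x n - z₂‖ ^ 2 - ‖x n - z₁‖ ^ 2 - ‖z₂‖ ^ 2 + ‖z₁‖ ^ 2) / 2 := by
      intro n
      have e1 := norm_sub_sq_real (x n) z₁
      have e2 := norm_sub_sq_real (x n) z₂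
      have e3 : (inner ℝ (z₁ - z₂) (x n) : ℝ) =
          (inner ℝ (x n) z₁ : ℝ) - (inner ℝ (x n) z₂ : ℝ) := by
        rw [real_inner_comm, inner_sub_right]
      rw [e3]
      linarith
    simp only [heq]
    exact h2
  -- uniqueness of weak cluster points lying in K
  have uniq : ∀ p ∈ K, ∀ q ∈ K,
      (∃ φ : ℕ → ℕ, StrictMono φ ∧ ∀ v : H,
        Tendsto (fun n => (inner ℝ v (x (φ n)) : ℝ)) atTop (nhds (inner ℝ v p : ℝ))) →
      (∃ φ : ℕ → ℕ, StrictMono φ ∧ ∀ v : H,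
        Tendsto (fun n => (inner ℝ v (x (φ n)) : ℝ)) atTop (nhds (inner ℝ v q : ℝ))) →
      p = q := by
    rintro p hp q hq ⟨φp, hφp, hconvp⟩ ⟨φq, hφq, hconvq⟩
    obtain ⟨c, hc⟩ := stepA p hp q hq
    have e1 : (inner ℝ (p - q) p : ℝ) = c := by
      have h1 : Tendsto (fun n => (inner ℝ (p - q) (x (φp n)) : ℝ)) atTop (nhds c) :=
        hc.comp hφp.tendsto_atTop
      exact tendsto_nhds_unique (hconvp (p - q)) h1
    have e2 : (inner ℝ (p - q) q : ℝ) = c := by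
      have h1 : Tendsto (fun n => (inner ℝ (p - q) (x (φq n)) : ℝ)) atTop (nhds c) :=
        hc.comp hφq.tendsto_atTop
      exact tendsto_nhds_unique (hconvq (p - q)) h1
    have e3 : (inner ℝ (p - q) (p - q) : ℝ) = 0 := by
      rw [inner_sub_right]
      linarith
    have := inner_self_eq_zero.1 e3
    exact sub_eq_zero.1 this
  -- the candidate limit
  obtain ⟨p₀, hp₀M, φ₀, hφ₀, hconv₀⟩ := opial_weak_subseq x M hM
  have hp₀K : p₀ ∈ K := hcluster p₀ ⟨φ₀, hφ₀, weak_of (x ∘ φ₀) p₀ hconv₀⟩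
  refine ⟨p₀, hp₀K, weak_of x p₀ ?_⟩
  intro v
  refine tendsto_of_subseq_tendsto ?_
  intro ns hns
  obtain ⟨ms, hms, hcomp⟩ := strictMono_subseq_of_tendsto_atTop hns
  obtain ⟨q, hqM, φ₁, hφ₁, hconv₁⟩ :=
    opial_weak_subseq (fun n => x (ns (ms n))) M (fun n => hM _)
  have hqcluster : ∃ φ : ℕ → ℕ, StrictMono φ ∧ ∀ v : H,
      Tendsto (fun n => (inner ℝ v (x (φ n)) : ℝ)) atTop (nhds (inner ℝ v q : ℝ)) :=
    ⟨fun n => ns (ms (φ₁ n)), hcomp.comp hφ₁, hconv₁⟩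
  have hqK : q ∈ K := by
    obtain ⟨φ, hφ, hconv⟩ := hqcluster
    exact hcluster q ⟨φ, hφ, weak_of (x ∘ φ) q hconv⟩
  have hqp : q = p₀ := uniq q hqK p₀ hp₀K hqcluster ⟨φ₀, hφ₀, hconv₀⟩
  refine ⟨fun n => ms (φ₁ n), ?_⟩
  have := hconv₁ v
  rw [hqp] at this
  exact this
end
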